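/- arXiv:0806.3592 — 2 statements merged into one kernel-verified Lean document; each statement's English description precedes it below -/
import Mathlib

section
/- For all Schwartz functions u: R^2 → R, one has the Ladyzhenskaya inequality ‖u‖_{L^4(R^2)} ≲ ‖u‖_{L^2(R^2)}^{1/2} ‖∂_x u‖_{L^2(R^2)}^{1/2}. -/
open MeasureTheory Real Set
open scoped ENNReal
open scoped NNReal

noncomputable section
local notation "E2" => EuclideanSpace ℝ (Fin 2)

lemma lady_core : ∃ C : ℝ≥0, ∀ v : E2 → ℝ, ContDiff ℝ 1 v → HasCompactSupport v →
    eLpNorm v 4 volume ≤ C * eLpNorm v 2 volume ^ ((1:ℝ)/2) *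
      eLpNorm (fderiv ℝ v) 2 volume ^ ((1:ℝ)/2) := by
  set K := eLpNormLESNormFDerivOneConst (volume : Measure E2) 2 with hK
  refine ⟨(2*K)^((1:ℝ)/2), fun v hv h2v => ?_⟩
  have hconj : NNReal.HolderConjugate (Module.finrank ℝ E2) 2 := by
    rw [finrank_euclideanSpace_fin]
    exact NNReal.holderConjugate_iff.mpr ⟨by norm_num, by rw [← NNReal.coe_inj]; push_cast; norm_num⟩
  set w : E2 → ℝ := fun x => v x * v x with hwdef
  have hw : ContDiff ℝ 1 w := hv.mul hv
  have h2w : HasCompactSupport w := h2v.mul_left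
  have key := eLpNorm_le_eLpNorm_fderiv_one (volume : Measure E2) hw h2w hconj
  -- LHS identity
  have hL : eLpNorm w 2 volume = eLpNorm v 4 volume ^ (2:ℝ) := by
    have hw2 : w = fun x => ‖v x‖ ^ (2:ℝ) := by
      funext x
      rw [show ((2:ℝ)) = ((2:ℕ):ℝ) by norm_num, Real.rpow_natCast,
        Real.norm_eq_abs, sq_abs, sq]
    rw [hw2, eLpNorm_norm_rpow v two_pos]
    norm_num
  -- derivative of w
  have hdw : fderiv ℝ w = (fun x => 2 * v x) • (fderiv ℝ v) := by
    funext x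
    have hdv := hv.differentiable one_ne_zero
    rw [Pi.smul_apply', hwdef]
    rw [fderiv_fun_mul (hdv x) (hdv x), ← add_smul, ← two_mul]
  have hD : eLpNorm (fderiv ℝ w) 1 volume ≤ 2 * eLpNorm v 2 volume * eLpNorm (fderiv ℝ v) 2 volume := by
    rw [hdw]
    have h := eLpNorm_smul_le_mul_eLpNorm (p := 2) (q := 2) (r := 1) (φ := fun x => (2:ℝ) * v x)
      ((hv.continuous_fderiv one_ne_zero).aestronglyMeasurable)
      ((continuous_const.mul hv.continuous).aestronglyMeasurable (μ := volume))
      (hpqr := ⟨by rw [inv_one, ← one_div, ENNReal.add_halves]⟩)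
    refine h.trans ?_
    have h2 : (fun x => 2 * v x) = (2:ℝ) • v := by funext x; simp
    rw [h2, eLpNorm_const_smul]
    simp [mul_assoc, Real.enorm_eq_ofReal]
  have key2 : eLpNorm v 4 volume ^ (2:ℝ) ≤
      ((2*K : ℝ≥0) : ℝ≥0∞) * (eLpNorm v 2 volume * eLpNorm (fderiv ℝ v) 2 volume) := by
    norm_cast at key
    rw [← hL]
    refine (key.trans (mul_le_mul_right hD _)).trans_eq ?_
    push_cast
    ring
  calc eLpNorm v 4 volume
      = (eLpNorm v 4 volume ^ (2:ℝ)) ^ ((1:ℝ)/2) := by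
        rw [← ENNReal.rpow_mul]; norm_num
    _ ≤ (((2*K:ℝ≥0):ℝ≥0∞) * (eLpNorm v 2 volume * eLpNorm (fderiv ℝ v) 2 volume)) ^ ((1:ℝ)/2) :=
        ENNReal.rpow_le_rpow key2 (by norm_num)
    _ = ((2*K)^((1:ℝ)/2) : ℝ≥0) * eLpNorm v 2 volume ^ ((1:ℝ)/2) *
        eLpNorm (fderiv ℝ v) 2 volume ^ ((1:ℝ)/2) := by
        rw [ENNReal.mul_rpow_of_nonneg _ _ (by norm_num),
          ENNReal.mul_rpow_of_nonneg _ _ (by norm_num),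
          ← ENNReal.coe_rpow_of_nonneg _ (by norm_num : (0:ℝ) ≤ 1/2), ← mul_assoc]

lemma schwartz_eLpNorm_two_ne_top {F : Type*} [NormedAddCommGroup F] [NormedSpace ℝ F]
    (f : SchwartzMap E2 F) : eLpNorm (⇑f) 2 volume ≠ ∞ := by
  set C : ℝ := SchwartzMap.seminorm ℝ 0 0 f with hC
  have hb : ∀ x, ‖f x‖ ≤ C := fun x => SchwartzMap.norm_le_seminorm ℝ f x
  have hg : Integrable (fun x => ‖f x‖ ^ (2:ℝ)) volume := by
    refine Integrable.mono' ((f.integrable (μ := volume)).norm.const_mul C)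
      ((f.continuous.norm.rpow_const (fun x => Or.inr (by norm_num))).aestronglyMeasurable)
      (Filter.Eventually.of_forall fun x => ?_)
    have h0 : (0:ℝ) ≤ ‖f x‖ := norm_nonneg _
    rw [Real.norm_eq_abs, abs_of_nonneg (Real.rpow_nonneg h0 _),
      show ((2:ℝ)) = ((2:ℕ):ℝ) by norm_num, Real.rpow_natCast, sq]
    exact mul_le_mul_of_nonneg_right (hb x) h0
  have h1 : eLpNorm (fun x => ‖f x‖ ^ (2:ℝ)) 1 volume < ∞ :=
    (memLp_one_iff_integrable.mpr hg).2
  rw [eLpNorm_norm_rpow _ two_pos] at h1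
  intro hcon
  rw [show ((1:ℝ≥0∞) * ENNReal.ofReal 2) = 2 by norm_num, hcon] at h1
  simp [ENNReal.top_rpow_of_pos (by norm_num : (0:ℝ) < 2)] at h1


/-- Ladyzhenskaya inequality on `ℝ²`:
`‖u‖_{L⁴} ≲ ‖u‖_{L²}^{1/2} ‖∂u‖_{L²}^{1/2}` for Schwartz `u`. -/
theorem ladyzhenskaya :
    ∃ C : ℝ, 0 < C ∧ ∀ u : SchwartzMap (EuclideanSpace ℝ (Fin 2)) ℝ,
      (eLpNorm (⇑u) 4 volume).toReal ≤
        C * (eLpNorm (⇑u) 2 volume).toReal ^ ((1 : ℝ) / 2) *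
          (eLpNorm (fun x => ‖fderiv ℝ (⇑u) x‖) 2 volume).toReal ^ ((1 : ℝ) / 2) := by
  obtain ⟨C, hC⟩ := lady_core
  refine ⟨(C:ℝ) + 1, by positivity, fun u => ?_⟩
  set X := eLpNorm (⇑u) 2 volume with hXdef
  set Y := eLpNorm (fderiv ℝ (⇑u)) 2 volume with hYdef
  have hX : X ≠ ∞ := schwartz_eLpNorm_two_ne_top u
  have hY : Y ≠ ∞ := by
    have h : (fderiv ℝ (⇑u)) = ⇑(SchwartzMap.fderivCLM ℝ E2 ℝ u) := by
      funext x; exact (SchwartzMap.fderivCLM_apply ℝ (E := E2) (F := ℝ) u x).symm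
    rw [hYdef, h]
    exact schwartz_eLpNorm_two_ne_top _
  have hu1 : ContDiff ℝ 1 ⇑u := u.smooth 1
  -- bump function and bound on its derivative
  set φ : ContDiffBump (0 : E2) := ⟨1, 2, one_pos, one_lt_two⟩ with hφdef
  obtain ⟨M0, hM0⟩ := (φ.hasCompactSupport.fderiv (𝕜 := ℝ)).exists_bound_of_continuous
    ((φ.contDiff (n := 1)).continuous_fderiv (by norm_num))
  set M : ℝ := max M0 0 with hMdef
  have hM : ∀ x, ‖fderiv ℝ (⇑φ) x‖ ≤ M := fun x => (hM0 x).trans (le_max_left _ _)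
  have hMnn : 0 ≤ M := le_max_right _ _
  -- cutoffs
  set χ : ℕ → E2 → ℝ := fun n x => φ ((n:ℝ)⁻¹ • x) with hχdef
  set v : ℕ → E2 → ℝ := fun n x => χ n x * u x with hvdef
  have hχc : ∀ n, ContDiff ℝ 1 (χ n) := fun n =>
    (φ.contDiff (n := 1)).comp (contDiff_id.const_smul ((n:ℝ)⁻¹))
  have hχd : ∀ n (x : E2), fderiv ℝ (χ n) x = (n:ℝ)⁻¹ • fderiv ℝ (⇑φ) ((n:ℝ)⁻¹ • x) := by
    intro n x
    have h1 : HasFDerivAt (fun y : E2 => (n:ℝ)⁻¹ • y)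
        ((n:ℝ)⁻¹ • ContinuousLinearMap.id ℝ E2) x := by
      exact (hasFDerivAt_id x).const_smul ((n:ℝ)⁻¹)
    have h2 : HasFDerivAt (⇑φ) (fderiv ℝ (⇑φ) ((n:ℝ)⁻¹ • x)) ((n:ℝ)⁻¹ • x) :=
      (((φ.contDiff (n := 1)).differentiable (by norm_num)) _).hasFDerivAt
    have h3 := h2.comp x h1
    have h4 : fderiv ℝ (χ n) x =
        (fderiv ℝ (⇑φ) ((n:ℝ)⁻¹ • x)).comp ((n:ℝ)⁻¹ • ContinuousLinearMap.id ℝ E2) :=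
      h3.fderiv
    rw [h4]
    ext y
    simp [_root_.map_smul]
  have hχnorm : ∀ n (x : E2), ‖fderiv ℝ (χ n) x‖ ≤ (n:ℝ)⁻¹ * M := by
    intro n x
    rw [hχd n x, norm_smul, Real.norm_eq_abs, abs_of_nonneg (by positivity)]
    exact mul_le_mul_of_nonneg_left (hM _) (by positivity)
  have hχ1 : ∀ (n : ℕ) (x : E2), ‖x‖ ≤ (n:ℝ) → χ n x = 1 := by
    intro n x hx
    apply φ.one_of_mem_closedBall
    have hrIn : φ.rIn = 1 := rfl
    rw [Metric.mem_closedBall, dist_zero_right, hrIn, norm_smul, Real.norm_eq_abs,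
      abs_of_nonneg (by positivity : (0:ℝ) ≤ (n:ℝ)⁻¹)]
    rcases Nat.eq_zero_or_pos n with h0 | hpos
    · have : ‖x‖ = 0 := le_antisymm (by simpa [h0] using hx) (norm_nonneg _)
      simp [this]
    · have hn : (0:ℝ) < n := by exact_mod_cast hpos
      rw [inv_mul_le_iff₀ hn, mul_one]
      exact hx
  -- per-n estimates
  have keybound : ∀ n : ℕ, 1 ≤ n → eLpNorm (v n) 4 volume ≤
      (C:ℝ≥0∞) * X ^ ((1:ℝ)/2) * (Y + ENNReal.ofReal ((n:ℝ)⁻¹ * M) * X) ^ ((1:ℝ)/2) := by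
    intro n hn
    have hvc : ContDiff ℝ 1 (v n) := (hχc n).mul hu1
    have hvs : HasCompactSupport (v n) := by
      have hcs : HasCompactSupport (χ n) := by
        apply φ.hasCompactSupport.comp_smul
        exact inv_ne_zero (by exact_mod_cast Nat.one_le_iff_ne_zero.mp hn)
      exact hcs.mul_right
    have bound2 : eLpNorm (v n) 2 volume ≤ X := by
      apply eLpNorm_mono
      intro x
      rw [Real.norm_eq_abs, Real.norm_eq_abs, hvdef, abs_mul]
      calc |χ n x| * |u x| ≤ 1 * |u x| := by
            apply mul_le_mul_of_nonneg_right _ (abs_nonneg _)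
            rw [abs_of_nonneg φ.nonneg]; exact φ.le_one
        _ = |u x| := one_mul _
    have boundD : eLpNorm (fderiv ℝ (v n)) 2 volume ≤ Y + ENNReal.ofReal ((n:ℝ)⁻¹ * M) * X := by
      have hpt : ∀ x, ‖fderiv ℝ (v n) x‖ ≤ ‖fderiv ℝ (⇑u) x‖ + (n:ℝ)⁻¹ * M * ‖u x‖ := by
        intro x
        have hd : fderiv ℝ (v n) x = χ n x • fderiv ℝ (⇑u) x + u x • fderiv ℝ (χ n) x :=
          fderiv_mul ((hχc n).differentiable one_ne_zero x) (hu1.differentiable one_ne_zero x)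
        rw [hd]
        refine (norm_add_le _ _).trans (add_le_add ?_ ?_)
        · rw [norm_smul, Real.norm_eq_abs, abs_of_nonneg φ.nonneg]
          exact mul_le_of_le_one_left (norm_nonneg _) φ.le_one
        · rw [norm_smul, mul_comm]
          calc ‖fderiv ℝ (χ n) x‖ * ‖u x‖ ≤ ((n:ℝ)⁻¹ * M) * ‖u x‖ :=
                mul_le_mul_of_nonneg_right (hχnorm n x) (norm_nonneg _)
            _ = (n:ℝ)⁻¹ * M * ‖u x‖ := rfl
      calc eLpNorm (fderiv ℝ (v n)) 2 volume
          ≤ eLpNorm ((fun x => ‖fderiv ℝ (⇑u) x‖) + fun x => (n:ℝ)⁻¹ * M * ‖u x‖) 2 volume :=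
            eLpNorm_mono_real (fun x => hpt x)
        _ ≤ eLpNorm (fun x => ‖fderiv ℝ (⇑u) x‖) 2 volume +
            eLpNorm (fun x => (n:ℝ)⁻¹ * M * ‖u x‖) 2 volume :=
            eLpNorm_add_le ((hu1.continuous_fderiv one_ne_zero).norm.aestronglyMeasurable)
              ((continuous_const.mul u.continuous.norm).aestronglyMeasurable) one_le_two
        _ = Y + ENNReal.ofReal ((n:ℝ)⁻¹ * M) * X := by
            rw [eLpNorm_norm]
            congr 1
            have heq : (fun x => (n:ℝ)⁻¹ * M * ‖u x‖) = ((n:ℝ)⁻¹ * M) • (fun x => ‖u x‖) := rfl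
            rw [heq, eLpNorm_const_smul, eLpNorm_norm]
            rw [Real.enorm_eq_ofReal (by positivity), ← hXdef]
    exact (hC (v n) hvc hvs).trans
      (mul_le_mul' (mul_le_mul' le_rfl (ENNReal.rpow_le_rpow bound2 (by norm_num)))
        (ENNReal.rpow_le_rpow boundD (by norm_num)))
  -- Fatou
  have hmeas : ∀ n, AEStronglyMeasurable (v n) volume := fun n =>
    (((hχc n).continuous).mul u.continuous).aestronglyMeasurable
  have hlim : ∀ x, Filter.Tendsto (fun n => v n x) Filter.atTop (nhds (u x)) := by
    intro x
    apply tendsto_atTop_of_eventually_const (i₀ := ⌈‖x‖⌉₊)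
    intro i hi
    have hxi : ‖x‖ ≤ i := (Nat.le_ceil _).trans (by exact_mod_cast hi)
    rw [show v i x = χ i x * u x from rfl, hχ1 i x hxi, one_mul]
  have hFatou : eLpNorm (⇑u) 4 volume ≤
      Filter.atTop.liminf fun n => eLpNorm (v n) 4 volume :=
    MeasureTheory.Lp.eLpNorm_lim_le_liminf_eLpNorm hmeas (⇑u) (Filter.Eventually.of_forall hlim)
  set b : ℕ → ℝ≥0∞ := fun n =>
    (C:ℝ≥0∞) * X ^ ((1:ℝ)/2) * (Y + ENNReal.ofReal ((n:ℝ)⁻¹ * M) * X) ^ ((1:ℝ)/2) with hbdef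
  have hlimle : (Filter.atTop.liminf fun n => eLpNorm (v n) 4 volume) ≤ Filter.atTop.liminf b :=
    Filter.liminf_le_liminf (Filter.eventually_atTop.2 ⟨1, fun n hn => keybound n hn⟩)
  have htb : Filter.Tendsto b Filter.atTop
      (nhds ((C:ℝ≥0∞) * X ^ ((1:ℝ)/2) * Y ^ ((1:ℝ)/2))) := by
    have h0 : Filter.Tendsto (fun n : ℕ => ENNReal.ofReal ((n:ℝ)⁻¹ * M) * X)
        Filter.atTop (nhds 0) := by
      have hr : Filter.Tendsto (fun n : ℕ => (n:ℝ)⁻¹ * M) Filter.atTop (nhds 0) := by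
        simpa using tendsto_inv_atTop_nhds_zero_nat.mul_const M
      have ho := ENNReal.tendsto_ofReal hr
      simpa using ENNReal.Tendsto.mul_const ho (Or.inr hX)
    have h1 : Filter.Tendsto (fun n : ℕ => Y + ENNReal.ofReal ((n:ℝ)⁻¹ * M) * X)
        Filter.atTop (nhds Y) := by
      simpa using tendsto_const_nhds.add h0
    have h2 := ((ENNReal.continuous_rpow_const (y := (1:ℝ)/2)).tendsto Y).comp h1
    have h3 := ENNReal.Tendsto.const_mul (a := (C:ℝ≥0∞) * X ^ ((1:ℝ)/2)) h2
      (Or.inr (ENNReal.mul_ne_top ENNReal.coe_ne_top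
        (ENNReal.rpow_ne_top_of_nonneg (by norm_num) hX)))
    exact h3
  have hENN : eLpNorm (⇑u) 4 volume ≤ (C:ℝ≥0∞) * X ^ ((1:ℝ)/2) * Y ^ ((1:ℝ)/2) :=
    hFatou.trans (hlimle.trans_eq htb.liminf_eq)
  -- pass to real numbers
  have hRfin : (C:ℝ≥0∞) * X ^ ((1:ℝ)/2) * Y ^ ((1:ℝ)/2) ≠ ∞ :=
    ENNReal.mul_ne_top (ENNReal.mul_ne_top ENNReal.coe_ne_top
      (ENNReal.rpow_ne_top_of_nonneg (by norm_num) hX))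
      (ENNReal.rpow_ne_top_of_nonneg (by norm_num) hY)
  have hreal := ENNReal.toReal_mono hRfin hENN
  rw [ENNReal.toReal_mul, ENNReal.toReal_mul, ← ENNReal.toReal_rpow, ← ENNReal.toReal_rpow,
    ENNReal.coe_toReal] at hreal
  rw [eLpNorm_norm]
  refine hreal.trans ?_
  have h1 : (C:ℝ) ≤ (C:ℝ) + 1 := by linarith
  gcongr
end
end

section
/- For all Schwartz functions u: R^2 → R, one has ‖u‖_{L^2(R^2)} ≲ ‖u‖_{L^1(R^2)}^{1/2} ‖∂_x^2 u‖_{L^1(R^2)}^{1/2}. -/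
open MeasureTheory Real Set Filter Topology
open scoped ENNReal

noncomputable section

namespace GNaux

abbrev E2 := EuclideanSpace ℝ (Fin 2)

def e (i : Fin 2) : E2 := EuclideanSpace.single i 1

def F (a b : ℝ) : E2 := a • e 0 + b • e 1

lemma F_apply_zero (a b : ℝ) : F a b 0 = a := by
  simp [F, e, EuclideanSpace.single_apply]

lemma F_apply_one (a b : ℝ) : F a b 1 = b := by
  simp [F, e, EuclideanSpace.single_apply]

lemma norm_F (a b : ℝ) : ‖F a b‖ = Real.sqrt (a ^ 2 + b ^ 2) := by
  rw [EuclideanSpace.norm_eq]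
  simp [Fin.sum_univ_two, F_apply_zero, F_apply_one, sq_abs]

lemma abs_le_norm_F_left (a b : ℝ) : |a| ≤ ‖F a b‖ := by
  rw [norm_F, ← Real.sqrt_sq_eq_abs]
  exact Real.sqrt_le_sqrt (by nlinarith [sq_nonneg b])

lemma abs_le_norm_F_right (a b : ℝ) : |b| ≤ ‖F a b‖ := by
  rw [norm_F, ← Real.sqrt_sq_eq_abs]
  exact Real.sqrt_le_sqrt (by nlinarith [sq_nonneg a])

lemma eq_F (x : E2) : x = F (x 0) (x 1) := by
  ext i
  fin_cases i
  · exact (F_apply_zero _ _).symm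
  · exact (F_apply_one _ _).symm

lemma decay_line (w : SchwartzMap E2 ℝ) :
    ∃ C, 0 ≤ C ∧ ∀ (x : E2) (t : ℝ), |t| ≤ ‖x‖ → ‖w x‖ ≤ C / (1 + t ^ 2) := by
  obtain ⟨C0, hC0pos, hC0⟩ := w.decay 0 0
  obtain ⟨C2, hC2pos, hC2⟩ := w.decay 2 0
  refine ⟨C0 + C2, by positivity, fun x t ht => ?_⟩
  have h1 := hC0 x
  have h2 := hC2 x
  simp only [norm_iteratedFDeriv_zero, pow_zero, one_mul] at h1 h2
  have ht2 : t ^ 2 ≤ ‖x‖ ^ 2 := by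
    have := sq_abs t
    nlinarith [abs_nonneg t, norm_nonneg x]
  rw [le_div_iff₀ (by positivity)]
  nlinarith [norm_nonneg (w x), norm_nonneg x]

lemma integrable_line (w : SchwartzMap E2 ℝ) (g : ℝ → E2) (hg : Continuous g)
    (hb : ∀ t, |t| ≤ ‖g t‖) : Integrable (fun t => w (g t)) volume := by
  obtain ⟨C, hC, h⟩ := decay_line w
  refine (integrable_inv_one_add_sq.const_mul C).mono'
    ((w.continuous.comp hg).aestronglyMeasurable) (ae_of_all _ fun t => ?_)
  simpa [div_eq_mul_inv] using h (g t) t (hb t)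

lemma tendsto_line (w : SchwartzMap E2 ℝ) (g : ℝ → E2) (hb : ∀ t, |t| ≤ ‖g t‖) :
    Tendsto (fun t => w (g t)) atBot (𝓝 0) := by
  obtain ⟨C, hC, h⟩ := decay_line w
  apply squeeze_zero_norm (fun t => h (g t) t (hb t))
  have hsq : Tendsto (fun t : ℝ => t ^ 2) atBot atTop := by
    have := (tendsto_pow_atTop (n := 2) two_ne_zero).comp
      (tendsto_abs_atBot_atTop (G := ℝ))
    simpa [Function.comp_def, sq_abs] using this
  have h2 : Tendsto (fun t : ℝ => 1 + t ^ 2) atBot atTop :=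
    tendsto_atTop_add_const_left _ 1 hsq
  exact tendsto_const_nhds.div_atTop h2

lemma contF_snd (a : ℝ) : Continuous fun t => F a t := by
  unfold F
  exact continuous_const.add (continuous_id.smul continuous_const)

lemma contF_fst (b : ℝ) : Continuous fun t => F t b := by
  unfold F
  exact (continuous_id.smul continuous_const).add continuous_const

lemma hasDerivAt_snd (w : SchwartzMap E2 ℝ) (a t : ℝ) :
    HasDerivAt (fun s => w (F a s)) (LineDeriv.lineDerivOpCLM ℝ (SchwartzMap E2 ℝ) (e 1) w (F a t)) t := by
  have hF : HasDerivAt (fun s : ℝ => F a s) (e 1) t := by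
    simpa [F] using ((hasDerivAt_id t).smul_const (e 1)).const_add (a • e 0)
  exact
    (w.differentiableAt.hasFDerivAt.comp_hasDerivAt t hF)

lemma hasDerivAt_fst (w : SchwartzMap E2 ℝ) (b t : ℝ) :
    HasDerivAt (fun s => w (F s b)) (LineDeriv.lineDerivOpCLM ℝ (SchwartzMap E2 ℝ) (e 0) w (F t b)) t := by
  have hF : HasDerivAt (fun s : ℝ => F s b) (e 0) t := by
    simpa [F] using ((hasDerivAt_id t).smul_const (e 0)).add_const (b • e 1)
  exact
    (w.differentiableAt.hasFDerivAt.comp_hasDerivAt t hF)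

lemma repr_snd (w : SchwartzMap E2 ℝ) (a b : ℝ) :
    w (F a b) = ∫ t in Iic b, LineDeriv.lineDerivOpCLM ℝ (SchwartzMap E2 ℝ) (e 1) w (F a t) := by
  have h := integral_Iic_of_hasDerivAt_of_tendsto'
    (f := fun t => w (F a t)) (f' := fun t => LineDeriv.lineDerivOpCLM ℝ (SchwartzMap E2 ℝ) (e 1) w (F a t))
    (a := b) (m := 0) (fun t _ => hasDerivAt_snd w a t)
    ((integrable_line _ _ (contF_snd a) (fun t => abs_le_norm_F_right a t)).integrableOn)
    (tendsto_line w _ (fun t => abs_le_norm_F_right a t))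
  rw [h, sub_zero]

lemma repr_fst (w : SchwartzMap E2 ℝ) (a b : ℝ) :
    w (F a b) = ∫ s in Iic a, LineDeriv.lineDerivOpCLM ℝ (SchwartzMap E2 ℝ) (e 0) w (F s b) := by
  have h := integral_Iic_of_hasDerivAt_of_tendsto'
    (f := fun s => w (F s b)) (f' := fun s => LineDeriv.lineDerivOpCLM ℝ (SchwartzMap E2 ℝ) (e 0) w (F s b))
    (a := a) (m := 0) (fun t _ => hasDerivAt_fst w b t)
    ((integrable_line _ _ (contF_fst b) (fun t => abs_le_norm_F_left t b)).integrableOn)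
    (tendsto_line w _ (fun t => abs_le_norm_F_left t b))
  rw [h, sub_zero]

def Φ : (ℝ × ℝ) ≃ᵐ E2 :=
  (MeasurableEquiv.piFinTwo (fun _ : Fin 2 => ℝ)).symm.trans
    (MeasurableEquiv.toLp 2 (Fin 2 → ℝ))

lemma Φ_eq (p : ℝ × ℝ) : Φ p = F p.1 p.2 := by
  have h0 : Φ p 0 = p.1 := rfl
  have h1 : Φ p 1 = p.2 := rfl
  ext i
  fin_cases i
  · exact h0.trans (F_apply_zero p.1 p.2).symm
  · exact h1.trans (F_apply_one p.1 p.2).symm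

lemma mpΦ : MeasurePreserving (⇑Φ) volume volume := by
  rw [show (⇑Φ) = (⇑(MeasurableEquiv.toLp 2 (Fin 2 → ℝ))) ∘
      (⇑(MeasurableEquiv.piFinTwo (fun _ : Fin 2 => ℝ)).symm) from rfl]
  exact ((EuclideanSpace.volume_preserving_symm_measurableEquiv_toLp (Fin 2)).symm).comp
    ((volume_preserving_piFinTwo (fun _ : Fin 2 => ℝ)).symm)

lemma hessian_ptwise (u : SchwartzMap E2 ℝ) (y : E2) :
    ‖LineDeriv.lineDerivOpCLM ℝ (SchwartzMap E2 ℝ) (e 0) (LineDeriv.lineDerivOpCLM ℝ (SchwartzMap E2 ℝ) (e 1) u) y‖ ≤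
      ‖iteratedFDeriv ℝ 2 (⇑u) y‖ := by
  have hd : HasFDerivAt (fderiv ℝ ⇑u) (fderiv ℝ (fderiv ℝ ⇑u) y) y := by
    have hcoe : (⇑(SchwartzMap.fderivCLM ℝ E2 ℝ u)) = fderiv ℝ ⇑u :=
      funext fun z => SchwartzMap.fderivCLM_apply ℝ u z
    have := (SchwartzMap.fderivCLM ℝ E2 ℝ u).differentiableAt (x := y)
    rw [hcoe] at this
    exact this.hasFDerivAt
  have h1 : (⇑(LineDeriv.lineDerivOpCLM ℝ (SchwartzMap E2 ℝ) (e 1) u)) =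
      fun z => (ContinuousLinearMap.apply ℝ ℝ (e 1)) (fderiv ℝ (⇑u) z) := by
    funext z
    simp [LineDeriv.lineDerivOpCLM_apply, SchwartzMap.lineDerivOp_apply_eq_fderiv]
  have h2 : fderiv ℝ (⇑(LineDeriv.lineDerivOpCLM ℝ (SchwartzMap E2 ℝ) (e 1) u)) y =
      (ContinuousLinearMap.apply ℝ ℝ (e 1)).comp (fderiv ℝ (fderiv ℝ ⇑u) y) := by
    rw [h1]
    exact (((ContinuousLinearMap.apply ℝ ℝ (e 1)).hasFDerivAt).comp y hd).fderiv
  have h3 : LineDeriv.lineDerivOpCLM ℝ (SchwartzMap E2 ℝ) (e 0) (LineDeriv.lineDerivOpCLM ℝ (SchwartzMap E2 ℝ) (e 1) u) y =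
      iteratedFDeriv ℝ 2 (⇑u) y ![e 0, e 1] := by
    rw [iteratedFDeriv_two_apply]
    rw [LineDeriv.lineDerivOpCLM_apply, SchwartzMap.lineDerivOp_apply_eq_fderiv, h2]
    simp
  rw [h3]
  calc ‖iteratedFDeriv ℝ 2 (⇑u) y ![e 0, e 1]‖
      ≤ ‖iteratedFDeriv ℝ 2 (⇑u) y‖ * ∏ i, ‖![e 0, e 1] i‖ :=
        ContinuousMultilinearMap.le_opNorm _ _
    _ = ‖iteratedFDeriv ℝ 2 (⇑u) y‖ := by
        rw [Fin.prod_univ_two]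
        simp [e, EuclideanSpace.norm_single]

lemma sup_bound (u : SchwartzMap E2 ℝ) (x : E2) :
    ‖u x‖ ≤ ∫ y, ‖iteratedFDeriv ℝ 2 (⇑u) y‖ := by
  set u1 := LineDeriv.lineDerivOpCLM ℝ (SchwartzMap E2 ℝ) (e 1) u with hu1
  set u2 := LineDeriv.lineDerivOpCLM ℝ (SchwartzMap E2 ℝ) (e 0) u1 with hu2
  obtain ⟨a, b, rfl⟩ : ∃ a b, x = F a b := ⟨x 0, x 1, eq_F x⟩
  -- integrability of the composed Hessian-norm on ℝ × ℝ
  have hu2norm : Integrable (fun y : E2 => ‖u2 y‖) volume := u2.integrable.norm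
  have hg2int : Integrable (fun p : ℝ × ℝ => ‖u2 (F p.1 p.2)‖) volume := by
    have := (mpΦ.integrable_comp_emb Φ.measurableEmbedding).mpr hu2norm
    refine this.congr (ae_of_all _ fun p => ?_)
    simp [Function.comp, Φ_eq]
  have hg2eq : (∫ p : ℝ × ℝ, ‖u2 (F p.1 p.2)‖) = ∫ y, ‖u2 y‖ := by
    rw [← mpΦ.integral_comp Φ.measurableEmbedding (fun y => ‖u2 y‖)]
    congr 1
    funext p
    rw [Φ_eq]
  -- the slice function
  set h : ℝ → ℝ := fun t => ∫ s, ‖u2 (F s t)‖ with hh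
  have hprod : Integrable (fun p : ℝ × ℝ => ‖u2 (F p.1 p.2)‖)
      ((volume : Measure ℝ).prod (volume : Measure ℝ)) := by
    rwa [← Measure.volume_eq_prod]
  have hint : Integrable h volume := by
    have := hprod.integral_prod_right
    simpa [hh] using this
  have hptw : ∀ t, ‖u1 (F a t)‖ ≤ h t := by
    intro t
    rw [show u1 (F a t) = ∫ s in Iic a, u2 (F s t) from repr_fst u1 a t]
    calc ‖∫ s in Iic a, u2 (F s t)‖ ≤ ∫ s in Iic a, ‖u2 (F s t)‖ :=
          norm_integral_le_integral_norm _
      _ ≤ ∫ s, ‖u2 (F s t)‖ :=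
          setIntegral_le_integral
            ((integrable_line u2 (fun s => F s t) (contF_fst t)
              (fun s => abs_le_norm_F_left s t)).norm)
            (ae_of_all _ fun _ => norm_nonneg _)
  have hu1int : Integrable (fun t => ‖u1 (F a t)‖) volume :=
    (integrable_line u1 (fun t => F a t) (contF_snd a)
      (fun t => abs_le_norm_F_right a t)).norm
  have step1 : ‖u (F a b)‖ ≤ ∫ t in Iic b, ‖u1 (F a t)‖ := by
    rw [show u (F a b) = ∫ t in Iic b, u1 (F a t) from repr_snd u a b]
    exact norm_integral_le_integral_norm _
  have step2 : (∫ t in Iic b, ‖u1 (F a t)‖) ≤ ∫ t, ‖u1 (F a t)‖ :=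
    setIntegral_le_integral hu1int (ae_of_all _ fun _ => norm_nonneg _)
  have step3 : (∫ t, ‖u1 (F a t)‖) ≤ ∫ t, h t :=
    integral_mono hu1int hint hptw
  have step4 : (∫ t, h t) = ∫ y, ‖u2 y‖ := by
    have hsw := integral_integral_swap (f := fun s t => ‖u2 (F s t)‖) hprod
    have hii := integral_integral (f := fun s t => ‖u2 (F s t)‖) hprod
    calc (∫ t, h t) = ∫ t, ∫ s, ‖u2 (F s t)‖ := rfl
      _ = ∫ s, ∫ t, ‖u2 (F s t)‖ := hsw.symm
      _ = ∫ p : ℝ × ℝ, ‖u2 (F p.1 p.2)‖ ∂((volume : Measure ℝ).prod volume) := hii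
      _ = ∫ p : ℝ × ℝ, ‖u2 (F p.1 p.2)‖ := by rw [← Measure.volume_eq_prod]
      _ = ∫ y, ‖u2 y‖ := hg2eq
  have hHessint : Integrable (fun y : E2 => ‖iteratedFDeriv ℝ 2 (⇑u) y‖) volume := by
    have := u.integrable_pow_mul_iteratedFDeriv volume 0 2
    simpa using this
  have step5 : (∫ y, ‖u2 y‖) ≤ ∫ y, ‖iteratedFDeriv ℝ 2 (⇑u) y‖ :=
    integral_mono hu2norm hHessint (fun y => hessian_ptwise u y)
  linarith

end GNaux

end


/-- Gagliardo–Nirenberg inequality on `ℝ²` with `L¹`-based norms: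
`‖u‖_{L²} ≲ ‖u‖_{L¹}^{1/2} ‖∂²u‖_{L¹}^{1/2}` for Schwartz `u`. -/
theorem gagliardo_nirenberg_L1 :
    ∃ C : ℝ, 0 < C ∧ ∀ u : SchwartzMap (EuclideanSpace ℝ (Fin 2)) ℝ,
      (eLpNorm (⇑u) 2 volume).toReal ≤
        C * (eLpNorm (⇑u) 1 volume).toReal ^ ((1 : ℝ) / 2) *
          (eLpNorm (fun x => ‖iteratedFDeriv ℝ 2 (⇑u) x‖) 1 volume).toReal ^ ((1 : ℝ) / 2) := by
  refine ⟨1, one_pos, fun u => ?_⟩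
  set D : EuclideanSpace ℝ (Fin 2) → ℝ := fun x => ‖iteratedFDeriv ℝ 2 (⇑u) x‖ with hD
  have hDint : Integrable D volume := by
    have := u.integrable_pow_mul_iteratedFDeriv volume 0 2
    simpa [hD] using this
  set M : ℝ := ∫ y, D y with hM
  have hM0 : 0 ≤ M := integral_nonneg fun y => norm_nonneg _
  have hsup : ∀ x, ‖u x‖ ≤ M := fun x => GNaux.sup_bound u x
  have hD1 : eLpNorm D 1 volume = ENNReal.ofReal M := by
    rw [eLpNorm_one_eq_lintegral_enorm]
    have h1 : (∫⁻ x, ‖D x‖ₑ) = ∫⁻ x, ENNReal.ofReal (D x) :=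
      lintegral_congr fun x => Real.enorm_eq_ofReal (norm_nonneg _)
    rw [h1, ← ofReal_integral_eq_lintegral_ofReal hDint (ae_of_all _ fun y => norm_nonneg _)]
  have hL1lt : eLpNorm (⇑u) 1 volume ≠ ⊤ :=
    (memLp_one_iff_integrable.mpr u.integrable).eLpNorm_ne_top
  have key : eLpNorm (⇑u) 2 volume ≤
      (ENNReal.ofReal M) ^ ((1:ℝ)/2) * (eLpNorm (⇑u) 1 volume) ^ ((1:ℝ)/2) := by
    rw [eLpNorm_eq_lintegral_rpow_enorm_toReal two_ne_zero ENNReal.ofNat_ne_top]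
    simp only [ENNReal.toReal_ofNat]
    have hpt : ∀ x, (‖u x‖₊ : ℝ≥0∞) ^ (2:ℝ) ≤ ENNReal.ofReal M * ‖u x‖₊ := by
      intro x
      have hx : (‖u x‖₊ : ℝ≥0∞) ≤ ENNReal.ofReal M := by
        rw [← enorm_eq_nnnorm, ← ofReal_norm]
        exact ENNReal.ofReal_le_ofReal (hsup x)
      calc (‖u x‖₊ : ℝ≥0∞) ^ (2:ℝ) = ‖u x‖₊ * ‖u x‖₊ := by
            rw [show (2:ℝ) = ((2:ℕ):ℝ) by norm_num, ENNReal.rpow_natCast, sq]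
        _ ≤ ENNReal.ofReal M * ‖u x‖₊ := mul_le_mul_left hx _
    calc (∫⁻ x, (‖u x‖₊ : ℝ≥0∞) ^ (2:ℝ)) ^ ((1:ℝ)/2)
        ≤ (ENNReal.ofReal M * ∫⁻ x, (‖u x‖₊ : ℝ≥0∞)) ^ ((1:ℝ)/2) := by
          apply ENNReal.rpow_le_rpow _ (by norm_num)
          rw [← lintegral_const_mul' _ _ ENNReal.ofReal_ne_top]
          exact lintegral_mono hpt
      _ = (ENNReal.ofReal M) ^ ((1:ℝ)/2) * (eLpNorm (⇑u) 1 volume) ^ ((1:ℝ)/2) := by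
          rw [eLpNorm_one_eq_lintegral_enorm, ENNReal.mul_rpow_of_nonneg _ _ (by norm_num)]
          rfl
  have hRHSne : (ENNReal.ofReal M) ^ ((1:ℝ)/2) * (eLpNorm (⇑u) 1 volume) ^ ((1:ℝ)/2) ≠ ⊤ :=
    ENNReal.mul_ne_top (ENNReal.rpow_ne_top_of_nonneg (by norm_num) ENNReal.ofReal_ne_top)
      (ENNReal.rpow_ne_top_of_nonneg (by norm_num) hL1lt)
  have hmain := ENNReal.toReal_mono hRHSne key
  rw [ENNReal.toReal_mul, ← ENNReal.toReal_rpow, ← ENNReal.toReal_rpow,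
    ENNReal.toReal_ofReal hM0] at hmain
  have hDval : (eLpNorm D 1 volume).toReal = M := by rw [hD1, ENNReal.toReal_ofReal hM0]
  rw [one_mul, hDval, mul_comm]
  exact hmain
end
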